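/- Let d ≥ 1, 0 < p, q ≤ ∞, a ∈ Ω = [0,1]^d, ξ > 0, s > 0 and ε > 0. Let s(·) : Ω → (0,∞) be log-Hölder continuous with inf_Ω s(·) > 0, and suppose that s(x) < s + ε for every x ∈ [a−ξ, a+ξ]^d ∩ Ω. Fix an integer r with r > s + ε and r > sup_Ω s(·), used in both moduli of smoothness. Then there exists a constant C > 0, independent of f, such that every f ∈ B_{p,q}^{s+ε}(Ω) whose support is contained in [a−ξ/2, a+ξ/2]^d satisfies ‖f‖_{B_{p,q}^{s(x)}(Ω)} ≤ C ‖f‖_{B_{p,q}^{s+ε}(Ω)}. -/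

import Mathlib

open MeasureTheory
open scoped ENNReal NNReal Classical

noncomputable section

abbrev Euc (d : ℕ) : Type := EuclideanSpace ℝ (Fin d)

/-- The unit cube `Ω = [0,1]^d`. -/
def unitCube (d : ℕ) : Set (Euc d) := {x | ∀ i, x i ∈ Set.Icc (0 : ℝ) 1}

/-- The axis-aligned cube `[c - t, c + t]^d`. -/
def cubeAt {d : ℕ} (c : Euc d) (t : ℝ) : Set (Euc d) := {x | ∀ i, |x i - c i| ≤ t}

/-- Lebesgue measure restricted to the unit cube `Ω`. -/
def cubeMeasure (d : ℕ) : Measure (Euc d) := volume.restrict (unitCube d)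

/-- `r`-th difference `Δ_h^r f (x) = Σ_{j=0}^r (−1)^{r−j} C(r,j) f(x+jh)`, set to `0`
unless both `x ∈ Ω` and `x + r h ∈ Ω`. -/
def rDiff {d : ℕ} (r : ℕ) (h : Euc d) (f : Euc d → ℝ) (x : Euc d) : ℝ :=
  if x ∈ unitCube d ∧ x + (r : ℝ) • h ∈ unitCube d then
    ∑ j ∈ Finset.range (r + 1), (-1 : ℝ) ^ (r - j) * (r.choose j : ℝ) * f (x + (j : ℝ) • h)
  else 0

/-- `ω*_{r,p}(f,t) = sup_{‖h‖₂ ≤ t} ‖ t^{−s(·)} Δ_h^r f ‖_{L^p(Ω)}`. -/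
def omegaStar {d : ℕ} (p : ℝ≥0∞) (σ : Euc d → ℝ) (r : ℕ) (f : Euc d → ℝ) (t : ℝ) : ℝ≥0∞ :=
  ⨆ h ∈ {h : Euc d | ‖h‖ ≤ t},
    eLpNorm (fun x => t ^ (-(σ x)) * rDiff r h f x) p (cubeMeasure d)

/-- Variable-exponent Besov seminorm `|f|_{B^{s(x)}_{p,q}(Ω)}` (difference order `r`):
`(∫_0^1 ω*_{r,p}(f,t)^q dt/t)^{1/q}` for `q < ∞`, and `sup_{t>0} ω*_{r,p}(f,t)` for `q = ∞`. -/
def vBesovSemi {d : ℕ} (p q : ℝ≥0∞) (σ : Euc d → ℝ) (r : ℕ) (f : Euc d → ℝ) : ℝ≥0∞ :=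
  if q = ∞ then ⨆ t ∈ Set.Ioi (0 : ℝ), omegaStar p σ r f t
  else (∫⁻ t in Set.Ioo (0 : ℝ) 1,
        (omegaStar p σ r f t) ^ q.toReal * ENNReal.ofReal (1 / t)) ^ (1 / q.toReal)

/-- Variable-exponent Besov (quasi-)norm with explicit difference order `r`:
`‖f‖ = ‖f‖_{L^p(Ω)} + |f|_{B^{s(x)}_{p,q}(Ω)}`. -/
def vBesovNormR {d : ℕ} (p q : ℝ≥0∞) (σ : Euc d → ℝ) (r : ℕ) (f : Euc d → ℝ) : ℝ≥0∞ :=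
  eLpNorm f p (cubeMeasure d) + vBesovSemi p q σ r f

/-- The canonical difference order `r = ⌊sup_Ω s(·)⌋ + 1`. -/
def besovR {d : ℕ} (σ : Euc d → ℝ) : ℕ := ⌊sSup (σ '' unitCube d)⌋₊ + 1

/-- Variable-exponent Besov (quasi-)norm `‖f‖_{B^{s(x)}_{p,q}(Ω)}` with the canonical
difference order `r = ⌊sup_Ω s(·)⌋ + 1`. -/
def vBesovNorm {d : ℕ} (p q : ℝ≥0∞) (σ : Euc d → ℝ) (f : Euc d → ℝ) : ℝ≥0∞ :=
  vBesovNormR p q σ (besovR σ) f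

/-- The unit ball `U_{B^{s(x)}_{p,q}(Ω)}`. -/
def vBesovUnitBall (d : ℕ) (p q : ℝ≥0∞) (σ : Euc d → ℝ) : Set (Euc d → ℝ) :=
  {f | vBesovNorm p q σ f ≤ 1}

/-- log-Hölder continuity on the unit cube: there exists `c_log > 0` with
`|σ x − σ y| ≤ c_log / log (e + 1/‖x−y‖₂)` for all `x ≠ y` in `Ω`. -/
def LogHolder {d : ℕ} (σ : Euc d → ℝ) : Prop :=
  ∃ c : ℝ, 0 < c ∧ ∀ x ∈ unitCube d, ∀ y ∈ unitCube d, x ≠ y →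
    |σ x - σ y| ≤ c / Real.log (Real.exp 1 + 1 / ‖x - y‖)

/-- Univariate cardinal B-spline of degree `m`. -/
def bspline (m : ℕ) (x : ℝ) : ℝ :=
  (m.factorial : ℝ)⁻¹ *
    ∑ j ∈ Finset.range (m + 2), (-1 : ℝ) ^ j * ((m + 1).choose j : ℝ) * max (x - j) 0 ^ m

/-- Tensor-product cardinal B-spline `M_{k,j}^d(x) = M_{0,0}^d(2^k x − j)`. -/
def Mspline (d m : ℕ) (k : ℕ) (j : Fin d → ℤ) (x : Euc d) : ℝ :=
  ∏ i, bspline m ((2 : ℝ) ^ k * x i - (j i : ℝ))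

/-- Lemma 3.1. Let `a ∈ Ω`, `ξ > 0`, `s, ε > 0`, and let `σ` be a
log-Hölder continuous smoothness function with positive infimum on `Ω` satisfying
`σ x < s + ε` on `[a−ξ, a+ξ]^d ∩ Ω`. Fix an integer `r` with `r > s + ε` and `r > sup_Ω σ`.
Then there is `C > 0` (independent of `f`) such that every `f ∈ B^{s+ε}_{p,q}(Ω)` supported
in `[a−ξ/2, a+ξ/2]^d` satisfies `‖f‖_{B^{σ}_{p,q}(Ω)} ≤ C ‖f‖_{B^{s+ε}_{p,q}(Ω)}`. -/
theorem vBesov_norm_le_of_small_support (d : ℕ) (hd : 1 ≤ d) (p q : ℝ≥0∞)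
    (hp : 0 < p) (hq : 0 < q) (a : Euc d) (ha : a ∈ unitCube d) (ξ : ℝ) (hξ : 0 < ξ)
    (s ε : ℝ) (hs : 0 < s) (hε : 0 < ε)
    (σ : Euc d → ℝ) (hσlh : LogHolder σ)
    (hσinf : ∃ σ₀ : ℝ, 0 < σ₀ ∧ ∀ x ∈ unitCube d, σ₀ ≤ σ x)
    (hσloc : ∀ x ∈ unitCube d ∩ cubeAt a ξ, σ x < s + ε)
    (r : ℕ) (hr₁ : s + ε < (r : ℝ)) (hr₂ : ∀ x ∈ unitCube d, σ x < (r : ℝ)) :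
    ∃ C : ℝ, 0 < C ∧ ∀ f : Euc d → ℝ,
      Function.support f ⊆ cubeAt a (ξ / 2) →
      vBesovNormR p q (fun _ => s + ε) r f ≠ ∞ →
      vBesovNormR p q σ r f ≤ ENNReal.ofReal C * vBesovNormR p q (fun _ => s + ε) r f := by
  obtain ⟨σ₀, hσ₀pos, hσ₀le⟩ := hσinf
  have hrpos : 0 < (r : ℝ) := lt_trans (by linarith) hr₁
  have hrnat : 1 ≤ r := by exact_mod_cast Nat.one_le_cast.mpr (by exact_mod_cast hrpos)
  set t₀ : ℝ := min (ξ / (2 * r)) 1 with ht₀def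
  have ht₀pos : 0 < t₀ := lt_min (by positivity) one_pos
  have ht₀le1 : t₀ ≤ 1 := min_le_right _ _
  set C₀ : ℝ := t₀ ^ (s + ε - r) with hC₀def
  have hC₀1 : 1 ≤ C₀ :=
    Real.one_le_rpow_of_pos_of_le_one_of_nonpos ht₀pos ht₀le1 (by linarith)
  set T₀ : ℝ := max 1 (Real.sqrt d) with hT₀def
  have hT₀1 : (1 : ℝ) ≤ T₀ := le_max_left _ _
  have hT₀pos : (0 : ℝ) < T₀ := lt_of_lt_of_le one_pos hT₀1
  set C : ℝ := max (max C₀ (T₀ ^ (s + ε))) 1 with hCdef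
  have hC1 : (1 : ℝ) ≤ C := le_max_right _ _
  have hcC₀ : ENNReal.ofReal C₀ ≤ ENNReal.ofReal C :=
    ENNReal.ofReal_le_ofReal (le_trans (le_max_left _ _) (le_max_left _ _))
  have hcT : ENNReal.ofReal (T₀ ^ (s + ε)) ≤ ENNReal.ofReal C :=
    ENNReal.ofReal_le_ofReal (le_trans (le_max_right _ _) (le_max_left _ _))
  have hc1 : (1 : ℝ≥0∞) ≤ ENNReal.ofReal C := ENNReal.one_le_ofReal.mpr hC1
  refine ⟨C, lt_of_lt_of_le one_pos hC1, ?_⟩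
  intro f hfsupp _
  -- coordinate bound
  have hcoord : ∀ (v : Euc d) (i : Fin d), |v i| ≤ ‖v‖ := by
    intro v i
    rw [EuclideanSpace.norm_eq]
    calc |v i| = Real.sqrt (‖v i‖ ^ 2) := by
          rw [Real.sqrt_sq_eq_abs, Real.norm_eq_abs, abs_abs]
      _ ≤ _ := Real.sqrt_le_sqrt
          (Finset.single_le_sum (fun j _ => sq_nonneg (‖v j‖)) (Finset.mem_univ i))
  -- structure of points where `rDiff` is nonzero
  have hkey : ∀ (h : Euc d) (x : Euc d), rDiff r h f x ≠ 0 →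
      x ∈ unitCube d ∧ x + (r : ℝ) • h ∈ unitCube d ∧
        ∃ j : ℕ, j ≤ r ∧ x + (j : ℝ) • h ∈ cubeAt a (ξ / 2) := by
    intro h x hx
    rw [rDiff] at hx
    by_cases hcond : x ∈ unitCube d ∧ x + (r : ℝ) • h ∈ unitCube d
    · refine ⟨hcond.1, hcond.2, ?_⟩
      rw [if_pos hcond] at hx
      obtain ⟨j, hj, hterm⟩ := Finset.exists_ne_zero_of_sum_ne_zero hx
      refine ⟨j, Nat.lt_succ_iff.mp (Finset.mem_range.mp hj), hfsupp ?_⟩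
      rw [Function.mem_support]
      intro h0
      exact hterm (by rw [h0, mul_zero])
    · rw [if_neg hcond] at hx; exact absurd rfl hx
  -- zero difference for large shifts
  have hbig : ∀ h : Euc d, T₀ < ‖h‖ → ∀ x, rDiff r h f x = 0 := by
    intro h hh x
    rw [rDiff, if_neg]
    rintro ⟨hx1, hx2⟩
    apply absurd hh
    push_neg
    calc ‖h‖ ≤ Real.sqrt d := by
          rw [EuclideanSpace.norm_eq]
          apply Real.sqrt_le_sqrt
          calc ∑ i, ‖h i‖ ^ 2 ≤ ∑ _i : Fin d, (1 : ℝ) := by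
                refine Finset.sum_le_sum fun i _ => ?_
                have h1 := hx1 i
                have h2 := hx2 i
                simp only [unitCube, Set.mem_setOf_eq, Set.mem_Icc] at h1 h2
                have h2' : x i + (r : ℝ) * h i ∈ Set.Icc (0 : ℝ) 1 := by
                  have := h2
                  simpa [PiLp.add_apply, PiLp.smul_apply, smul_eq_mul] using
                    (by simpa [unitCube] using hx2 i : (x + (r : ℝ) • h) i ∈ Set.Icc (0 : ℝ) 1)
                have hr1 : |(r : ℝ) * h i| ≤ 1 := by
                  rw [abs_le]
                  obtain ⟨hl, hu⟩ := h2'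
                  constructor <;> nlinarith [hx1 i, (by simpa [unitCube] using hx1 i :
                    x i ∈ Set.Icc (0:ℝ) 1).1]
                have habs : |h i| ≤ 1 := by
                  have : |h i| ≤ (r : ℝ) * |h i| := le_mul_of_one_le_left (abs_nonneg _)
                    (by simpa using (Nat.one_le_cast.mpr hrnat : (1:ℝ) ≤ r))
                  calc |h i| ≤ (r : ℝ) * |h i| := this
                    _ = |(r : ℝ) * h i| := by rw [abs_mul, abs_of_nonneg hrpos.le]
                    _ ≤ 1 := hr1
                calc ‖h i‖ ^ 2 = |h i| ^ 2 := by rw [Real.norm_eq_abs]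
                  _ ≤ 1 ^ 2 := by gcongr
                  _ = 1 := one_pow 2
            _ = (d : ℝ) := by simp
      _ ≤ T₀ := le_max_right _ _
  -- weight comparison for small times
  have hwt : ∀ t : ℝ, 0 < t → t ≤ 1 → ∀ h : Euc d, ‖h‖ ≤ t → ∀ x,
      rDiff r h f x ≠ 0 → t ^ (-(σ x)) ≤ C₀ * t ^ (-(s + ε)) := by
    intro t ht0 ht1 h hh x hx
    obtain ⟨hxΩ, -, j, hj, hcube⟩ := hkey h x hx
    by_cases hts : t ≤ ξ / (2 * r)
    · have hσx : σ x < s + ε := by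
        refine hσloc x ⟨hxΩ, ?_⟩
        intro i
        have h1 : |x i + (j : ℝ) * h i - a i| ≤ ξ / 2 := by
          have := hcube i
          simpa [cubeAt, PiLp.add_apply, PiLp.smul_apply, smul_eq_mul] using this
        have h2 : |h i| ≤ t := le_trans (hcoord h i) hh
        have h3 : (j : ℝ) ≤ (r : ℝ) := by exact_mod_cast hj
        have h4 : (r : ℝ) * t ≤ ξ / 2 := by
          calc (r : ℝ) * t ≤ (r : ℝ) * (ξ / (2 * r)) :=
                mul_le_mul_of_nonneg_left hts hrpos.le
            _ = ξ / 2 := by field_simp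
        have h5 : |(j : ℝ) * h i| ≤ (r : ℝ) * t := by
          rw [abs_mul, abs_of_nonneg (Nat.cast_nonneg j)]
          exact mul_le_mul h3 h2 (abs_nonneg _) hrpos.le
        have h6 : |x i - a i| ≤ |x i + (j : ℝ) * h i - a i| + |(j : ℝ) * h i| := by
          have he : x i - a i = (x i + (j : ℝ) * h i - a i) + (-((j : ℝ) * h i)) := by ring
          rw [he]
          exact (abs_add_le _ _).trans (by rw [abs_neg])
        linarith
      calc t ^ (-(σ x)) ≤ t ^ (-(s + ε)) :=
            Real.rpow_le_rpow_of_exponent_ge ht0 ht1 (by linarith)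
        _ ≤ C₀ * t ^ (-(s + ε)) :=
            le_mul_of_one_le_left (Real.rpow_nonneg ht0.le _) hC₀1
    · have hσr : σ x < (r : ℝ) := hr₂ x hxΩ
      have ht₀t : t₀ ≤ t := le_trans (min_le_left _ _) (le_of_not_ge hts)
      have e1 : t ^ (-(σ x)) = t ^ (s + ε - σ x) * t ^ (-(s + ε)) := by
        rw [← Real.rpow_add ht0]; ring_nf
      rw [e1]
      refine mul_le_mul_of_nonneg_right ?_ (Real.rpow_nonneg ht0.le _)
      calc t ^ (s + ε - σ x) ≤ t ^ (s + ε - (r : ℝ)) :=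
            Real.rpow_le_rpow_of_exponent_ge ht0 ht1 (by linarith)
        _ ≤ t₀ ^ (s + ε - (r : ℝ)) :=
            Real.rpow_le_rpow_of_nonpos ht₀pos ht₀t (by linarith)
  -- comparison of moduli for small times
  have homega : ∀ t : ℝ, 0 < t → t ≤ 1 →
      omegaStar p σ r f t ≤ ENNReal.ofReal C₀ * omegaStar p (fun _ => s + ε) r f t := by
    intro t ht0 ht1
    rw [omegaStar]
    refine iSup₂_le fun h hh => ?_
    calc eLpNorm (fun x => t ^ (-(σ x)) * rDiff r h f x) p (cubeMeasure d)
        ≤ eLpNorm (C₀ • fun x => t ^ (-(s + ε)) * rDiff r h f x) p (cubeMeasure d) := by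
          refine eLpNorm_mono fun x => ?_
          simp only [Pi.smul_apply, smul_eq_mul, Real.norm_eq_abs]
          by_cases hx : rDiff r h f x = 0
          · simp [hx]
          · rw [abs_mul, abs_mul, abs_mul]
            have hb := hwt t ht0 ht1 h hh x hx
            rw [abs_of_nonneg (Real.rpow_nonneg ht0.le _),
              abs_of_nonneg (le_trans zero_le_one hC₀1),
              abs_of_nonneg (Real.rpow_nonneg ht0.le _), ← mul_assoc]
            exact mul_le_mul_of_nonneg_right hb (abs_nonneg _)
      _ = (‖C₀‖₊ : ℝ≥0∞) *
            eLpNorm (fun x => t ^ (-(s + ε)) * rDiff r h f x) p (cubeMeasure d) :=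
          eLpNorm_const_smul _ _ _ _
      _ ≤ ENNReal.ofReal C₀ * omegaStar p (fun _ => s + ε) r f t := by
          refine mul_le_mul' ?_ ?_
          · rw [← ENNReal.ofReal_coe_nnreal]
            exact ENNReal.ofReal_le_ofReal (by
              simp [Real.nnnorm_of_nonneg (le_trans zero_le_one hC₀1),
                abs_of_nonneg (le_trans zero_le_one hC₀1)])
          · rw [omegaStar]
            exact le_iSup₂ (f := fun (h : Euc d) (_ : h ∈ {h : Euc d | ‖h‖ ≤ t}) =>
              eLpNorm (fun x => t ^ (-(s + ε)) * rDiff r h f x) p (cubeMeasure d)) h hh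
  -- comparison for large times
  have hlarge : ∀ t : ℝ, 1 ≤ t → omegaStar p σ r f t ≤
      ENNReal.ofReal (T₀ ^ (s + ε)) * omegaStar p (fun _ => s + ε) r f T₀ := by
    intro t ht
    have ht0 : (0 : ℝ) < t := lt_of_lt_of_le one_pos ht
    rw [omegaStar]
    refine iSup₂_le fun h hh => ?_
    by_cases hhT : ‖h‖ ≤ T₀
    · have hTpow : (0 : ℝ) ≤ T₀ ^ (s + ε) := Real.rpow_nonneg hT₀pos.le _
      calc eLpNorm (fun x => t ^ (-(σ x)) * rDiff r h f x) p (cubeMeasure d)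
          ≤ eLpNorm ((T₀ ^ (s + ε)) •
              fun x => T₀ ^ (-(s + ε)) * rDiff r h f x) p (cubeMeasure d) := by
            refine eLpNorm_mono fun x => ?_
            simp only [Pi.smul_apply, smul_eq_mul, Real.norm_eq_abs]
            by_cases hx : rDiff r h f x = 0
            · simp [hx]
            · obtain ⟨hxΩ, -, -⟩ := hkey h x hx
              have hσx : (0 : ℝ) < σ x := lt_of_lt_of_le hσ₀pos (hσ₀le x hxΩ)
              have h1 : t ^ (-(σ x)) ≤ 1 :=
                Real.rpow_le_one_of_one_le_of_nonpos ht (by linarith)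
              have h2 : T₀ ^ (s + ε) * T₀ ^ (-(s + ε)) = 1 := by
                rw [← Real.rpow_add hT₀pos, add_neg_cancel, Real.rpow_zero]
              rw [abs_mul, abs_mul, abs_mul,
                abs_of_nonneg (Real.rpow_nonneg ht0.le _), abs_of_nonneg hTpow,
                abs_of_nonneg (Real.rpow_nonneg hT₀pos.le _), ← mul_assoc, h2, one_mul]
              exact (mul_le_mul_of_nonneg_right h1 (abs_nonneg _)).trans_eq (one_mul _)
        _ = (‖T₀ ^ (s + ε)‖₊ : ℝ≥0∞) *
              eLpNorm (fun x => T₀ ^ (-(s + ε)) * rDiff r h f x) p (cubeMeasure d) :=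
            eLpNorm_const_smul _ _ _ _
        _ ≤ ENNReal.ofReal (T₀ ^ (s + ε)) * omegaStar p (fun _ => s + ε) r f T₀ := by
            refine mul_le_mul' ?_ ?_
            · rw [← ENNReal.ofReal_coe_nnreal]
              exact ENNReal.ofReal_le_ofReal (by
                simp [Real.nnnorm_of_nonneg hTpow, abs_of_nonneg hTpow])
            · rw [omegaStar]
              exact le_iSup₂ (f := fun (h : Euc d) (_ : h ∈ {h : Euc d | ‖h‖ ≤ T₀}) =>
                eLpNorm (fun x => T₀ ^ (-(s + ε)) * rDiff r h f x) p (cubeMeasure d)) h hhT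
    · have h0 : ∀ x, rDiff r h f x = 0 := hbig h (lt_of_not_ge hhT)
      have : (fun x => t ^ (-(σ x)) * rDiff r h f x) = fun _ => (0 : ℝ) := by
        funext x; rw [h0 x, mul_zero]
      rw [this]
      simpa using (zero_le _)
  -- seminorm comparison
  have hsemi : vBesovSemi p q σ r f ≤
      ENNReal.ofReal C * vBesovSemi p q (fun _ => s + ε) r f := by
    by_cases hqtop : q = ∞
    · rw [vBesovSemi, vBesovSemi, if_pos hqtop, if_pos hqtop]
      refine iSup₂_le fun t ht => ?_
      have ht0 : (0 : ℝ) < t := ht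
      have hS : ∀ u : ℝ, 0 < u → omegaStar p (fun _ => s + ε) r f u ≤
          ⨆ u ∈ Set.Ioi (0 : ℝ), omegaStar p (fun _ => s + ε) r f u := fun u hu =>
        le_iSup₂ (f := fun (u : ℝ) (_ : u ∈ Set.Ioi (0 : ℝ)) =>
          omegaStar p (fun _ => s + ε) r f u) u hu
      by_cases ht1 : t ≤ 1
      · calc omegaStar p σ r f t ≤
              ENNReal.ofReal C₀ * omegaStar p (fun _ => s + ε) r f t := homega t ht0 ht1
          _ ≤ _ := mul_le_mul' hcC₀ (hS t ht0)
      · calc omegaStar p σ r f t ≤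
              ENNReal.ofReal (T₀ ^ (s + ε)) * omegaStar p (fun _ => s + ε) r f T₀ :=
            hlarge t (le_of_not_ge ht1)
          _ ≤ _ := mul_le_mul' hcT (hS T₀ hT₀pos)
    · rw [vBesovSemi, vBesovSemi, if_neg hqtop, if_neg hqtop]
      have hq' : 0 < q.toReal := ENNReal.toReal_pos hq.ne' hqtop
      have hcne : (ENNReal.ofReal C₀) ^ q.toReal ≠ ∞ :=
        ENNReal.rpow_ne_top_of_nonneg hq'.le ENNReal.ofReal_ne_top
      calc (∫⁻ t in Set.Ioo (0 : ℝ) 1,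
              (omegaStar p σ r f t) ^ q.toReal * ENNReal.ofReal (1 / t)) ^ (1 / q.toReal)
          ≤ (∫⁻ t in Set.Ioo (0 : ℝ) 1, (ENNReal.ofReal C₀) ^ q.toReal *
              ((omegaStar p (fun _ => s + ε) r f t) ^ q.toReal *
                ENNReal.ofReal (1 / t))) ^ (1 / q.toReal) := by
            refine ENNReal.rpow_le_rpow ?_ (by positivity)
            refine lintegral_mono_ae
              (ae_restrict_of_forall_mem measurableSet_Ioo fun t ht => ?_)
            calc (omegaStar p σ r f t) ^ q.toReal * ENNReal.ofReal (1 / t)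
                ≤ (ENNReal.ofReal C₀ * omegaStar p (fun _ => s + ε) r f t) ^ q.toReal *
                    ENNReal.ofReal (1 / t) := by
                  exact mul_le_mul' (ENNReal.rpow_le_rpow (homega t ht.1 ht.2.le) hq'.le)
                    le_rfl
              _ = _ := by
                  rw [ENNReal.mul_rpow_of_nonneg _ _ hq'.le, mul_assoc]
        _ = ((ENNReal.ofReal C₀) ^ q.toReal * ∫⁻ t in Set.Ioo (0 : ℝ) 1,
              (omegaStar p (fun _ => s + ε) r f t) ^ q.toReal *
                ENNReal.ofReal (1 / t)) ^ (1 / q.toReal) := by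
            rw [lintegral_const_mul' _ _ hcne]
        _ = ENNReal.ofReal C₀ * (∫⁻ t in Set.Ioo (0 : ℝ) 1,
              (omegaStar p (fun _ => s + ε) r f t) ^ q.toReal *
                ENNReal.ofReal (1 / t)) ^ (1 / q.toReal) := by
            rw [ENNReal.mul_rpow_of_nonneg _ _ (by positivity), ← ENNReal.rpow_mul,
              mul_one_div_cancel hq'.ne', ENNReal.rpow_one]
        _ ≤ _ := mul_le_mul' hcC₀ le_rfl
  -- conclusion
  rw [vBesovNormR, vBesovNormR, mul_add]
  refine add_le_add ?_ hsemi
  calc eLpNorm f p (cubeMeasure d) = 1 * eLpNorm f p (cubeMeasure d) := (one_mul _).symm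
    _ ≤ ENNReal.ofReal C * eLpNorm f p (cubeMeasure d) := mul_le_mul_left hc1 _
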